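/- Let P be a well-filtered dcpo (with the Scott topology) that is not sober and suppose every irreducible closed subset of ΣP is either a principal lower set ↓x or all of P. Then the core compactly generated topology of the standard sobrification P^s of ΣP equals the Scott topology on the poset (IRR(P), ⊆) of irreducible closed subsets ordered by inclusion. -/

import Mathlib

open Set TopologicalSpace

universe u

section OrderDefs

variable {X : Type u}

/-- `U` is an upper set with respect to the relation `le`. -/
def IsUpperSetWrt (le : X → X → Prop) (U : Set X) : Prop :=
  ∀ ⦃x⦄, x ∈ U → ∀ ⦃y⦄, le x y → y ∈ U

/-- `s` is an upper bound of `D` with respect to `le`. -/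
def IsUBWrt (le : X → X → Prop) (D : Set X) (s : X) : Prop := ∀ d ∈ D, le d s

/-- `s` is a least upper bound (supremum) of `D` with respect to `le`. -/
def IsSupWrt (le : X → X → Prop) (D : Set X) (s : X) : Prop :=
  IsUBWrt le D s ∧ ∀ t, IsUBWrt le D t → le s t

/-- `D` is a (nonempty) directed subset with respect to `le`. -/
def DirectedSubset (le : X → X → Prop) (D : Set X) : Prop :=
  D.Nonempty ∧ ∀ a ∈ D, ∀ b ∈ D, ∃ c ∈ D, le a c ∧ le b c

/-- `U` is Scott open with respect to `le`: an upper set inaccessible by directed suprema. -/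
def ScottOpenWrt (le : X → X → Prop) (U : Set X) : Prop :=
  IsUpperSetWrt le U ∧
    ∀ D, DirectedSubset le D → ∀ s, IsSupWrt le D s → s ∈ U → (D ∩ U).Nonempty

/-- The Scott topology determined by the relation `le`. -/
def scottTop (le : X → X → Prop) : TopologicalSpace X where
  IsOpen := ScottOpenWrt le
  isOpen_univ := by
    refine ⟨fun x _ y _ => trivial, fun D hD s _ _ => ?_⟩
    obtain ⟨d, hd⟩ := hD.1
    exact ⟨d, hd, trivial⟩
  isOpen_inter := by
    rintro U V ⟨hUup, hUd⟩ ⟨hVup, hVd⟩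
    refine ⟨fun x hx y hxy => ⟨hUup hx.1 hxy, hVup hx.2 hxy⟩, ?_⟩
    rintro D hD s hs ⟨hsU, hsV⟩
    obtain ⟨a, haD, haU⟩ := hUd D hD s hs hsU
    obtain ⟨b, hbD, hbV⟩ := hVd D hD s hs hsV
    obtain ⟨c, hcD, hac, hbc⟩ := hD.2 a haD b hbD
    exact ⟨c, hcD, hUup haU hac, hVup hbV hbc⟩
  isOpen_sUnion := by
    intro S hS
    refine ⟨fun x hx y hxy => ?_, ?_⟩
    · obtain ⟨U, hU, hxU⟩ := hx
      exact ⟨U, hU, (hS U hU).1 hxU hxy⟩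
    · rintro D hD s hs ⟨U, hU, hsU⟩
      obtain ⟨d, hdD, hdU⟩ := (hS U hU).2 D hD s hs hsU
      exact ⟨d, hdD, U, hU, hdU⟩

end OrderDefs

section TopDefs

variable {X : Type u} [TopologicalSpace X]

/-- The specialization order of a topological space: `x ≤ y` iff `x ∈ cl {y}`. -/
def specLE (x y : X) : Prop := x ∈ closure ({y} : Set X)

/-- The upward closure of `A` in the specialization order. -/
def upSet (A : Set X) : Set X := {y | ∃ a ∈ A, specLE a y}

/-- `V` is way below `U`: every open cover of `U` admits a finite subfamily covering `V`. -/
def WayBelow (V U : Set X) : Prop :=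
  ∀ S : Set (Set X), (∀ W ∈ S, IsOpen W) → U ⊆ ⋃₀ S →
    ∃ F : Finset (Set X), ↑F ⊆ S ∧ V ⊆ ⋃₀ (F : Set (Set X))

/-- A space is core compact if its lattice of open sets is continuous, i.e. every open
set is the union of the open sets way below it. -/
def CoreCompact (X : Type u) [TopologicalSpace X] : Prop :=
  ∀ U : Set X, IsOpen U → ∀ x ∈ U, ∃ V : Set X, IsOpen V ∧ x ∈ V ∧ WayBelow V U

/-- `V` is open in the core compactly generated topology:
preimages under every continuous map from a core compact space are open. -/
def ccgOpen (X : Type u) [TopologicalSpace X] (V : Set X) : Prop :=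
  ∀ (C : Type u) (tC : TopologicalSpace C), CoreCompact C →
    ∀ ρ : C → X, Continuous ρ → IsOpen (ρ ⁻¹' V)

/-- The core compactly generated topology `𝒞X`. -/
def ccgTopology (X : Type u) [TopologicalSpace X] : TopologicalSpace X where
  IsOpen := ccgOpen X
  isOpen_univ := by intro C tC _ ρ hρ; simpa using isOpen_univ
  isOpen_inter := by
    intro U V hU hV C tC hc ρ hρ
    exact (hU C tC hc ρ hρ).inter (hV C tC hc ρ hρ)
  isOpen_sUnion := by
    intro S hS C tC hc ρ hρ
    rw [preimage_sUnion]
    exact isOpen_biUnion fun t ht => hS t ht C tC hc ρ hρ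

/-- A space is core compactly generated if its topology coincides with the
core compactly generated topology. -/
def CCGenerated (X : Type u) [t : TopologicalSpace X] : Prop := ccgTopology X = t

/-- A set is saturated if it is the intersection of the open sets containing it. -/
def Saturated (K : Set X) : Prop := K = ⋂₀ {U : Set X | IsOpen U ∧ K ⊆ U}

/-- A T₀ space is well-filtered if every filtered family of nonempty compact saturated sets
whose intersection is contained in an open set has a member contained in that open set. -/
def WellFiltered (X : Type u) [TopologicalSpace X] : Prop :=
  T0Space X ∧ ∀ 𝒦 : Set (Set X), 𝒦.Nonempty →
    (∀ K ∈ 𝒦, K.Nonempty ∧ IsCompact K ∧ Saturated K) →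
    (∀ K₁ ∈ 𝒦, ∀ K₂ ∈ 𝒦, ∃ K₃ ∈ 𝒦, K₃ ⊆ K₁ ∧ K₃ ⊆ K₂) →
    ∀ U : Set X, IsOpen U → ⋂₀ 𝒦 ⊆ U → ∃ K ∈ 𝒦, K ⊆ U

/-- A T₀ space is ω-well-filtered if the well-filteredness condition holds for
countable filtered families of nonempty compact saturated sets. -/
def OmegaWellFiltered (X : Type u) [TopologicalSpace X] : Prop :=
  T0Space X ∧ ∀ K : ℕ → Set X,
    (∀ n, (K n).Nonempty ∧ IsCompact (K n) ∧ Saturated (K n)) →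
    (∀ m n, ∃ k, K k ⊆ K m ∧ K k ⊆ K n) →
    ∀ U : Set X, IsOpen U → (⋂ n, K n) ⊆ U → ∃ n, K n ⊆ U

/-- A space is sober if it is T₀ and every irreducible closed set is the closure of a
(unique) point. -/
def SoberSpace (X : Type u) [TopologicalSpace X] : Prop :=
  T0Space X ∧ ∀ A : Set X, IsIrreducible A → IsClosed A → ∃! x : X, A = closure ({x} : Set X)

/-- A T₀ space is a monotone convergence space if the closure of every directed subset
(in the specialization order) is the closure of a point. -/
def MonotoneConvergenceSpace (X : Type u) [TopologicalSpace X] : Prop :=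
  T0Space X ∧ ∀ D : Set X, DirectedSubset specLE D → ∃ x : X, closure D = closure ({x} : Set X)

/-- The hull-kernel style topology on a family of subsets of `X`, generated by the sets
`U^s = {A | A ∩ U ≠ ∅}` for `U` open in `X`. -/
def hullTop (S : Set X → Prop) : TopologicalSpace {A : Set X // S A} :=
  generateFrom {s : Set {A : Set X // S A} |
    ∃ U : Set X, IsOpen U ∧ s = {A : {A : Set X // S A} | ((A : Set X) ∩ U).Nonempty}}

end TopDefs

/-- The Scott topology of a partial order. -/
def sigmaTop (P : Type u) [PartialOrder P] : TopologicalSpace P := scottTop (· ≤ ·)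

/-- Irreducible closed subsets of the Scott space of `P`. -/
def IrrCl (P : Type u) [PartialOrder P] (A : Set P) : Prop :=
  @IsIrreducible P (sigmaTop P) A ∧ @IsClosed P (sigmaTop P) A

/-- The standard sobrification of the Scott space of `P`. -/
abbrev Sobrification (P : Type u) [PartialOrder P] := {A : Set P // IrrCl P A}

/-- The hull-kernel topology on the standard sobrification. -/
def sobrTop (P : Type u) [PartialOrder P] : TopologicalSpace (Sobrification P) :=
  @hullTop P (sigmaTop P) (IrrCl P)

/-! ### Auxiliary development for Statement 4 -/

section Stmt4Aux

open Classical

/-! #### Way-below basics (arbitrary space) -/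

section WB

variable {C : Type u} [tC : TopologicalSpace C]

lemma wayBelow_subset {V U : Set C} (hU : IsOpen U) (h : WayBelow V U) : V ⊆ U := by
  obtain ⟨F, hFs, hVF⟩ := h {U} (by rintro W rfl; exact hU) (Set.subset_sUnion_of_mem rfl)
  refine hVF.trans ?_
  intro x hx
  obtain ⟨W, hWF, hxW⟩ := hx
  have : W = U := hFs hWF
  rwa [this] at hxW

lemma wayBelow_mono_left {V' V U : Set C} (h : V' ⊆ V) (hVU : WayBelow V U) : WayBelow V' U := by
  intro S hS hcov
  obtain ⟨F, hFs, hVF⟩ := hVU S hS hcov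
  exact ⟨F, hFs, h.trans hVF⟩

lemma wayBelow_mono_right {V U U' : Set C} (hVU : WayBelow V U) (h : U ⊆ U') : WayBelow V U' :=
  fun S hS hcov => hVU S hS (h.trans hcov)

lemma wayBelow_empty (U : Set C) : WayBelow (∅ : Set C) U :=
  fun _ _ _ => ⟨∅, by simp, by simp⟩

lemma wayBelow_union {V₁ V₂ U : Set C} (h₁ : WayBelow V₁ U) (h₂ : WayBelow V₂ U) :
    WayBelow (V₁ ∪ V₂) U := by
  intro S hS hcov
  obtain ⟨F₁, hF₁s, hV₁⟩ := h₁ S hS hcov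
  obtain ⟨F₂, hF₂s, hV₂⟩ := h₂ S hS hcov
  refine ⟨F₁ ∪ F₂, ?_, ?_⟩
  · intro W hW
    rcases Finset.mem_coe.mp hW with hW'
    rcases Finset.mem_union.mp hW' with h | h
    · exact hF₁s h
    · exact hF₂s h
  · intro x hx
    rcases hx with hx | hx
    · obtain ⟨W, hWF, hxW⟩ := hV₁ hx
      exact ⟨W, Finset.mem_coe.mpr (Finset.mem_union_left _ (Finset.mem_coe.mp hWF)), hxW⟩
    · obtain ⟨W, hWF, hxW⟩ := hV₂ hx
      exact ⟨W, Finset.mem_coe.mpr (Finset.mem_union_right _ (Finset.mem_coe.mp hWF)), hxW⟩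

lemma wayBelow_biUnion {ι : Type*} {F : Finset ι} {f : ι → Set C} {U : Set C}
    (h : ∀ i ∈ F, WayBelow (f i) U) : WayBelow (⋃ i ∈ F, f i) U := by
  classical
  induction F using Finset.induction_on with
  | empty => simpa using wayBelow_empty U
  | insert a F' hnotmem ih =>
      have : (⋃ i ∈ insert a F', f i) = f a ∪ ⋃ i ∈ F', f i := by
        simp [Set.biUnion_insert]
      rw [this]
      exact wayBelow_union (h a (Finset.mem_insert_self a F'))
        (ih fun i hi => h i (Finset.mem_insert_of_mem hi))

lemma wayBelow_of_finite {V U : Set C} (hfin : V.Finite) (hVU : V ⊆ U) : WayBelow V U := by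
  intro S hSo hcov
  have hx : ∀ x : V, ∃ W, W ∈ S ∧ (x : C) ∈ W := by
    intro x
    obtain ⟨W, hW, hxW⟩ := hcov (hVU x.2)
    exact ⟨W, hW, hxW⟩
  choose f hf1 hf2 using hx
  haveI := hfin.to_subtype
  refine ⟨(Set.finite_range f).toFinset, ?_, ?_⟩
  · intro W hW
    rw [Finset.mem_coe, Set.Finite.mem_toFinset] at hW
    obtain ⟨x, rfl⟩ := hW
    exact hf1 x
  · intro x hxV
    exact ⟨f ⟨x, hxV⟩, by
      rw [Finset.mem_coe, Set.Finite.mem_toFinset]; exact ⟨⟨x, hxV⟩, rfl⟩, hf2 ⟨x, hxV⟩⟩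

lemma exists_interpolant (hcc : CoreCompact C) {A B : Set C} (hB : IsOpen B)
    (hAB : WayBelow A B) : ∃ Z, IsOpen Z ∧ WayBelow A Z ∧ WayBelow Z B := by
  classical
  set 𝒮 : Set (Set C) := {Z | IsOpen Z ∧ ∃ Z', IsOpen Z' ∧ WayBelow Z Z' ∧ WayBelow Z' B}
    with h𝒮
  have hcov : B ⊆ ⋃₀ 𝒮 := by
    intro x hx
    obtain ⟨V, hVo, hxV, hVB⟩ := hcc B hB x hx
    obtain ⟨V', hV'o, hxV', hV'V⟩ := hcc V hVo x hxV
    exact ⟨V', ⟨hV'o, V, hVo, hV'V, hVB⟩, hxV'⟩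
  obtain ⟨F, hFS, hAF⟩ := hAB 𝒮 (fun W hW => hW.1) hcov
  set g : Set C → Set C := fun Z => if h : Z ∈ 𝒮 then h.2.choose else ∅ with hg
  have hgZ : ∀ Z ∈ F, IsOpen (g Z) ∧ WayBelow Z (g Z) ∧ WayBelow (g Z) B := by
    intro Z hZ
    have hZ𝒮 : Z ∈ 𝒮 := hFS hZ
    have hspec := hZ𝒮.2.choose_spec
    rw [hg]; simp only [dif_pos hZ𝒮]
    exact hspec
  refine ⟨⋃ Z ∈ F, g Z, isOpen_biUnion (fun Z hZ => (hgZ Z hZ).1), ?_, ?_⟩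
  · -- A ≪ big union
    refine wayBelow_mono_left hAF ?_
    have : (⋃₀ (F : Set (Set C))) = ⋃ Z ∈ F, Z := by
      ext x; simp
    rw [this]
    refine wayBelow_biUnion (fun Z hZ => ?_)
    exact wayBelow_mono_right ((hgZ Z hZ).2.1)
      (Set.subset_biUnion_of_mem (u := g) hZ)
  · exact wayBelow_biUnion (fun Z hZ => (hgZ Z hZ).2.2)

lemma chain_finset_ub {ch : Set (Set C)} (hch : IsChain (· ⊆ ·) ch) {W₀ : Set C}
    (hW₀ : W₀ ∈ ch) (F : Finset (Set C)) (hF : ↑F ⊆ ch) :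
    ∃ W ∈ ch, ∀ s ∈ F, s ⊆ W := by
  classical
  induction F using Finset.induction_on with
  | empty => exact ⟨W₀, hW₀, by simp⟩
  | insert a F' hnotmem ih =>
      obtain ⟨W, hWch, hWub⟩ := ih (fun s hs => hF (by simp [hs]))
      have ha : a ∈ ch := hF (by simp)
      rcases eq_or_ne a W with rfl | hne
      · exact ⟨a, ha, fun s hs => by
          rcases Finset.mem_insert.mp hs with rfl | hs
          · exact subset_rfl
          · exact hWub s hs⟩
      rcases hch ha hWch hne with h | h
      · exact ⟨W, hWch, fun s hs => by
          rcases Finset.mem_insert.mp hs with rfl | hs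
          · exact h
          · exact hWub s hs⟩
      · exact ⟨a, ha, fun s hs => by
          rcases Finset.mem_insert.mp hs with rfl | hs
          · exact subset_rfl
          · exact (hWub s hs).trans h⟩

/-- One interpolation step keeping `V₀` way below. -/
noncomputable def wbNext (hcc : CoreCompact C) {V₀ : Set C}
    (p : {p : Set C // IsOpen p ∧ WayBelow V₀ p}) : {p : Set C // IsOpen p ∧ WayBelow V₀ p} :=
  ⟨(exists_interpolant hcc p.2.1 p.2.2).choose,
    (exists_interpolant hcc p.2.1 p.2.2).choose_spec.1,
    (exists_interpolant hcc p.2.1 p.2.2).choose_spec.2.1⟩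

lemma wbNext_wb (hcc : CoreCompact C) {V₀ : Set C}
    (p : {p : Set C // IsOpen p ∧ WayBelow V₀ p}) :
    WayBelow (wbNext hcc p).1 p.1 :=
  (exists_interpolant hcc p.2.1 p.2.2).choose_spec.2.2

/-- The interpolating chain below an open set `O` containing a point, relative to `V₀ ≪ O`. -/
noncomputable def wbChain (hcc : CoreCompact C) (V₀ O : Set C) (hO : IsOpen O)
    (hwb : WayBelow V₀ O) : ℕ → {p : Set C // IsOpen p ∧ WayBelow V₀ p} :=
  fun n => Nat.rec ⟨O, hO, hwb⟩ (fun _ ih => wbNext hcc ih) n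

lemma wbChain_zero (hcc : CoreCompact C) (V₀ O : Set C) (hO : IsOpen O)
    (hwb : WayBelow V₀ O) : (wbChain hcc V₀ O hO hwb 0).1 = O := rfl

lemma wbChain_succ (hcc : CoreCompact C) (V₀ O : Set C) (hO : IsOpen O)
    (hwb : WayBelow V₀ O) (n : ℕ) :
    WayBelow (wbChain hcc V₀ O hO hwb (n + 1)).1 (wbChain hcc V₀ O hO hwb n).1 :=
  wbNext_wb hcc (wbChain hcc V₀ O hO hwb n)

end WB

end Stmt4Aux

/-! #### Scott topology on `P` and its sobrification -/

section Stmt4P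

open Classical

variable {P : Type u} [PartialOrder P]

local instance instTopP : TopologicalSpace P := sigmaTop P
local instance instTopM : TopologicalSpace (Sobrification P) := sobrTop P

lemma sOpen_iff {U : Set P} : IsOpen U ↔ ScottOpenWrt (· ≤ ·) U := Iff.rfl

def dset (x : P) : Set P := {y | y ≤ x}

lemma mem_dset {x y : P} : y ∈ dset x ↔ y ≤ x := Iff.rfl

lemma upper_of_open {U : Set P} (hU : IsOpen U) {x y : P} (hx : x ∈ U) (hxy : x ≤ y) :
    y ∈ U := (sOpen_iff.mp hU).1 hx hxy

lemma lower_of_closed {A : Set P} (hA : IsClosed A) {x y : P} (hx : x ∈ A) (hyx : y ≤ x) :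
    y ∈ A := by
  by_contra hy
  exact (sOpen_iff.mp hA.isOpen_compl).1 hy hyx hx

lemma sup_mem_closed {A : Set P} (hA : IsClosed A) {D : Set P}
    (hD : DirectedSubset (· ≤ ·) D) (hDA : D ⊆ A) {s : P}
    (hs : IsSupWrt (· ≤ ·) D s) : s ∈ A := by
  by_contra hsA
  obtain ⟨d, hdD, hdc⟩ := (sOpen_iff.mp hA.isOpen_compl).2 D hD s hs hsA
  exact hdc (hDA hdD)

lemma dset_closed (x : P) : IsClosed (dset x) := by
  rw [← isOpen_compl_iff]
  refine sOpen_iff.mpr ⟨fun a ha b hab hb => ha (le_trans hab hb), ?_⟩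
  intro D hD s hs hsc
  by_contra hne
  refine hsc (hs.2 x fun d hd => ?_)
  by_contra hdx
  exact hne ⟨d, hd, hdx⟩

lemma irrcl_dset (x : P) : IrrCl P (dset x) :=
  ⟨⟨⟨x, le_refl x⟩, fun u v hu hv hu' hv' => by
      obtain ⟨a, ha, hau⟩ := hu'
      obtain ⟨b, hb, hbv⟩ := hv'
      exact ⟨x, le_refl x, upper_of_open hu hau ha, upper_of_open hv hbv hb⟩⟩,
   dset_closed x⟩

lemma closure_singleton_eq (x : P) : closure ({x} : Set P) = dset x := by
  apply subset_antisymm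
  · exact closure_minimal (by intro y hy; rw [hy]; exact le_refl x) (dset_closed x)
  · intro y hy
    rw [mem_closure_iff]
    intro o ho hyo
    exact ⟨x, upper_of_open ho hyo hy, rfl⟩

def dnM (x : P) : Sobrification P := ⟨dset x, irrcl_dset x⟩

def UsS (U : Set P) : Set (Sobrification P) := {A | ((A : Set P) ∩ U).Nonempty}

lemma nonempty_val (A : Sobrification P) : (A : Set P).Nonempty := A.2.1.1

lemma UsS_mono {U V : Set P} (h : U ⊆ V) : UsS U ⊆ UsS V := by
  rintro A ⟨p, hpA, hpU⟩
  exact ⟨p, hpA, h hpU⟩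

lemma isOpen_UsS {U : Set P} (hU : IsOpen U) : IsOpen (UsS U) := by
  show TopologicalSpace.GenerateOpen _ _
  exact TopologicalSpace.GenerateOpen.basic _ ⟨U, hU, rfl⟩

lemma sobr_isOpen_iff {s : Set (Sobrification P)} :
    IsOpen s ↔ ∃ U : Set P, IsOpen U ∧ s = UsS U := by
  constructor
  · intro hs
    have hs' : TopologicalSpace.GenerateOpen
        {t : Set (Sobrification P) |
          ∃ U : Set P, IsOpen U ∧ t = {A : Sobrification P | ((A : Set P) ∩ U).Nonempty}} s := hs
    clear hs
    induction hs' with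
    | basic t ht => obtain ⟨U, hU, rfl⟩ := ht; exact ⟨U, hU, rfl⟩
    | univ =>
        refine ⟨Set.univ, isOpen_univ, ?_⟩
        ext A
        simp only [UsS, Set.inter_univ, Set.mem_setOf_eq, Set.mem_univ, true_iff]
        exact nonempty_val A
    | inter t₁ t₂ h₁ h₂ ih₁ ih₂ =>
        obtain ⟨U₁, hU₁, rfl⟩ := ih₁
        obtain ⟨U₂, hU₂, rfl⟩ := ih₂
        refine ⟨U₁ ∩ U₂, hU₁.inter hU₂, ?_⟩
        ext A
        constructor
        · rintro ⟨h1, h2⟩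
          exact A.2.1.2 U₁ U₂ hU₁ hU₂ h1 h2
        · rintro ⟨a, haA, ha1, ha2⟩
          exact ⟨⟨a, haA, ha1⟩, ⟨a, haA, ha2⟩⟩
    | sUnion S hS ih =>
        choose U hUo hUeq using ih
        refine ⟨⋃ t : S, U t.1 t.2, isOpen_iUnion fun t => hUo t.1 t.2, ?_⟩
        ext A
        constructor
        · rintro ⟨t, htS, hAt⟩
          rw [hUeq t htS] at hAt
          obtain ⟨a, haA, haU⟩ := hAt
          exact ⟨a, haA, Set.mem_iUnion.mpr ⟨⟨t, htS⟩, haU⟩⟩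
        · rintro ⟨a, haA, haU⟩
          obtain ⟨⟨t, htS⟩, hat⟩ := Set.mem_iUnion.mp haU
          exact ⟨t, htS, by rw [hUeq t htS]; exact ⟨a, haA, hat⟩⟩
  · rintro ⟨U, hU, rfl⟩; exact isOpen_UsS hU

lemma UsS_inter {U V : Set P} (hU : IsOpen U) (hV : IsOpen V) :
    UsS (U ∩ V) = UsS U ∩ UsS V := by
  ext A
  constructor
  · rintro ⟨a, haA, ha1, ha2⟩
    exact ⟨⟨a, haA, ha1⟩, ⟨a, haA, ha2⟩⟩
  · rintro ⟨h1, h2⟩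
    exact A.2.1.2 U V hU hV h1 h2

lemma UsS_iUnion {ι : Type*} (f : ι → Set P) : UsS (⋃ i, f i) = ⋃ i, UsS (f i) := by
  ext A
  constructor
  · rintro ⟨a, haA, haU⟩
    obtain ⟨i, hi⟩ := Set.mem_iUnion.mp haU
    exact Set.mem_iUnion.mpr ⟨i, a, haA, hi⟩
  · intro h
    obtain ⟨i, a, haA, hai⟩ := Set.mem_iUnion.mp h
    exact ⟨a, haA, Set.mem_iUnion.mpr ⟨i, hai⟩⟩

end Stmt4P

/-! #### Test spaces and the easy inclusion -/

section Stmt4Dir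

open Classical

variable {P : Type u} [PartialOrder P]

local instance : TopologicalSpace P := sigmaTop P
local instance : TopologicalSpace (Sobrification P) := sobrTop P

/-- The Sierpiński space used for the specialization-order test. -/
def sierpTop : TopologicalSpace (ULift.{u} Bool) where
  IsOpen O := ULift.up false ∈ O → O = Set.univ
  isOpen_univ := fun _ => rfl
  isOpen_inter := by
    intro s t hs ht h
    rw [hs h.1, ht h.2, Set.univ_inter]
  isOpen_sUnion := by
    intro S hS h
    obtain ⟨s, hsS, hs⟩ := h
    apply Set.eq_univ_of_univ_subset
    rw [← hS s hsS hs]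
    exact Set.subset_sUnion_of_mem hsS

lemma sierp_cc : @CoreCompact (ULift.{u} Bool) sierpTop := by
  intro U hU x hx
  exact ⟨U, hU, hx, @wayBelow_of_finite _ sierpTop _ _ (Set.toFinite U) subset_rfl⟩

section OptSpace

variable (𝒟 : Set (Sobrification P)) (S : Sobrification P)

/-- The map collapsing the added top of the directed-test space. -/
def optF : Option {A : Sobrification P // A ∈ 𝒟} → Sobrification P :=
  fun o => o.elim S Subtype.val

def optLe (a b : Option {A : Sobrification P // A ∈ 𝒟}) : Prop :=
  (optF 𝒟 S a : Set P) ⊆ (optF 𝒟 S b : Set P)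

/-- Topology on a directed family with an added top point. -/
def optTop (h𝒟 : DirectedSubset (fun A B : Sobrification P => (A : Set P) ⊆ (B : Set P)) 𝒟) :
    TopologicalSpace (Option {A : Sobrification P // A ∈ 𝒟}) where
  IsOpen O := (∀ a ∈ O, ∀ b, optLe 𝒟 S a b → b ∈ O) ∧ (none ∈ O → ∃ d, some d ∈ O)
  isOpen_univ := by
    refine ⟨fun _ _ _ _ => trivial, fun _ => ?_⟩
    obtain ⟨A, hA⟩ := h𝒟.1
    exact ⟨⟨A, hA⟩, trivial⟩
  isOpen_inter := by
    rintro s t ⟨hsu, hsn⟩ ⟨htu, htn⟩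
    refine ⟨fun a ha b hab => ⟨hsu a ha.1 b hab, htu a ha.2 b hab⟩, fun hn => ?_⟩
    obtain ⟨d₁, hd₁⟩ := hsn hn.1
    obtain ⟨d₂, hd₂⟩ := htn hn.2
    obtain ⟨A₃, hA₃, h13, h23⟩ := h𝒟.2 d₁.1 d₁.2 d₂.1 d₂.2
    exact ⟨⟨A₃, hA₃⟩, hsu _ hd₁ _ h13, htu _ hd₂ _ h23⟩
  isOpen_sUnion := by
    intro Sfam hS
    refine ⟨fun a ha b hab => ?_, fun hn => ?_⟩
    · obtain ⟨s, hsS, has⟩ := ha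
      exact ⟨s, hsS, (hS s hsS).1 a has b hab⟩
    · obtain ⟨s, hsS, hns⟩ := hn
      obtain ⟨d, hd⟩ := (hS s hsS).2 hns
      exact ⟨d, s, hsS, hd⟩

lemma opt_cc (h𝒟 : DirectedSubset (fun A B : Sobrification P => (A : Set P) ⊆ (B : Set P)) 𝒟)
    (hS : IsUBWrt (fun A B : Sobrification P => (A : Set P) ⊆ (B : Set P)) 𝒟 S) :
    @CoreCompact _ (optTop 𝒟 S h𝒟) := by
  intro U hU x hx
  obtain ⟨d, hdU, hdx⟩ : ∃ d, some d ∈ U ∧ optLe 𝒟 S (some d) x := by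
    match x with
    | some d => exact ⟨d, hx, subset_rfl⟩
    | none =>
        obtain ⟨d, hd⟩ := hU.2 hx
        exact ⟨d, hd, hS d.1 d.2⟩
  refine ⟨{b | optLe 𝒟 S (some d) b},
    ⟨fun a ha b hab => Set.Subset.trans ha hab, fun _ => ⟨d, fun _ hp => hp⟩⟩, hdx, ?_⟩
  intro Sc hSc hcov
  obtain ⟨W, hWSc, hdW⟩ := hcov hdU
  refine ⟨{W}, by simpa using hWSc, ?_⟩
  intro b hb
  have hbW : b ∈ W := (hSc W hWSc).1 (some d) hdW b hb
  exact Set.mem_sUnion.mpr ⟨W, by simp, hbW⟩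

end OptSpace

section Hyps

lemma supMeet (hdcpo : ∀ D : Set P, DirectedSubset (· ≤ · : P → P → Prop) D →
      ∃ s : P, IsSupWrt (· ≤ ·) D s)
    (hirr : ∀ A : Set P, IrrCl P A → (∃ x : P, A = {y | y ≤ x}) ∨ A = Set.univ)
    (𝒟 : Set (Sobrification P))
    (h𝒟 : DirectedSubset (fun A B : Sobrification P => (A : Set P) ⊆ (B : Set P)) 𝒟)
    (S : Sobrification P)
    (hS : IsSupWrt (fun A B : Sobrification P => (A : Set P) ⊆ (B : Set P)) 𝒟 S)
    (U : Set P) (hU : IsOpen U) (hSU : ((S : Set P) ∩ U).Nonempty) :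
    ∃ A ∈ 𝒟, ((A : Set P) ∩ U).Nonempty := by
  by_cases hexuniv : ∃ A ∈ 𝒟, (A : Set P) = Set.univ
  · obtain ⟨A, hA, hAu⟩ := hexuniv
    obtain ⟨u, _, huU⟩ := hSU
    exact ⟨A, hA, ⟨u, by rw [hAu]; trivial, huU⟩⟩
  · push_neg at hexuniv
    have hdn : ∀ A, A ∈ 𝒟 → ∃ x, (A : Set P) = dset x := by
      intro A hA
      rcases hirr A A.2 with h | h
      · exact h
      · exact absurd h (hexuniv A hA)
    set D : Set P := {x | ∃ A ∈ 𝒟, (A : Set P) = dset x} with hDdef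
    have hDdir : DirectedSubset (· ≤ ·) D := by
      constructor
      · obtain ⟨A, hA⟩ := h𝒟.1
        obtain ⟨x, hx⟩ := hdn A hA
        exact ⟨x, A, hA, hx⟩
      · rintro a ⟨A, hA, hAa⟩ b ⟨B, hB, hBb⟩
        obtain ⟨E, hE, hAE, hBE⟩ := h𝒟.2 A hA B hB
        obtain ⟨e, he⟩ := hdn E hE
        refine ⟨e, ⟨E, hE, he⟩, ?_, ?_⟩
        · have : a ∈ (E : Set P) := hAE (by rw [hAa]; exact le_refl a)
          rwa [he] at this
        · have : b ∈ (E : Set P) := hBE (by rw [hBb]; exact le_refl b)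
          rwa [he] at this
    obtain ⟨s, hs⟩ := hdcpo D hDdir
    have hub : IsUBWrt (fun A B : Sobrification P => (A : Set P) ⊆ (B : Set P)) 𝒟 (dnM s) := by
      intro A hA
      obtain ⟨x, hx⟩ := hdn A hA
      have hxD : x ∈ D := ⟨A, hA, hx⟩
      intro p hp
      rw [hx] at hp
      exact le_trans hp (hs.1 x hxD)
    have hSsub : (S : Set P) ⊆ dset s := hS.2 (dnM s) hub
    obtain ⟨u, huS, huU⟩ := hSU
    have hsU : s ∈ U := upper_of_open hU huU (hSsub huS)
    obtain ⟨d, hdD, hdU⟩ := (sOpen_iff.mp hU).2 D hDdir s hs hsU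
    obtain ⟨A, hA, hAd⟩ := hdD
    exact ⟨A, hA, ⟨d, by rw [hAd]; exact le_refl d, hdU⟩⟩

lemma ccg_to_scott (hdcpo : ∀ D : Set P, DirectedSubset (· ≤ · : P → P → Prop) D →
      ∃ s : P, IsSupWrt (· ≤ ·) D s)
    (hirr : ∀ A : Set P, IrrCl P A → (∃ x : P, A = {y | y ≤ x}) ∨ A = Set.univ)
    (V : Set (Sobrification P)) (h : ccgOpen (Sobrification P) V) :
    ScottOpenWrt (fun A B : Sobrification P => (A : Set P) ⊆ (B : Set P)) V := by
  constructor
  · -- V is an upper set: Sierpiński test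
    intro A hA B hAB
    set ρ : ULift.{u} Bool → Sobrification P := fun b => if b.down then B else A with hρdef
    have hcont : @Continuous _ _ sierpTop _ ρ := by
      rw [@continuous_def]
      intro s hs
      rcases sobr_isOpen_iff.mp hs with ⟨U, hUo, rfl⟩
      intro hfalse
      have hAU : A ∈ UsS U := by simpa [hρdef] using hfalse
      have hBU : B ∈ UsS U := UsS_mono (subset_refl U) (by
        obtain ⟨p, hpA, hpU⟩ := hAU
        exact ⟨p, hAB hpA, hpU⟩)
      apply Set.eq_univ_of_forall
      intro b
      show ρ b ∈ UsS U
      rcases Bool.eq_false_or_eq_true b.down with hb | hb <;>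
        simp [hρdef, hb, hAU, hBU]
    have hpre := h (ULift.{u} Bool) sierpTop sierp_cc ρ hcont
    have hfalse : ULift.up false ∈ ρ ⁻¹' V := by simpa [hρdef] using hA
    have huniv := hpre hfalse
    have : ULift.up true ∈ ρ ⁻¹' V := by rw [huniv]; trivial
    simpa [hρdef] using this
  · -- inaccessibility by directed sups
    intro 𝒟 h𝒟 S hS hSV
    have hcont : @Continuous _ _ (optTop 𝒟 S h𝒟) _ (optF 𝒟 S) := by
      rw [@continuous_def]
      intro s hs
      rcases sobr_isOpen_iff.mp hs with ⟨U, hUo, rfl⟩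
      constructor
      · intro a ha b hab
        obtain ⟨p, hpa, hpU⟩ := ha
        exact ⟨p, hab hpa, hpU⟩
      · intro hn
        obtain ⟨A, hA𝒟, hAU⟩ := supMeet hdcpo hirr 𝒟 h𝒟 S hS U hUo hn
        exact ⟨⟨A, hA𝒟⟩, hAU⟩
    have hpre := h _ (optTop 𝒟 S h𝒟) (opt_cc 𝒟 S h𝒟 hS.1) (optF 𝒟 S) hcont
    have hnone : none ∈ optF 𝒟 S ⁻¹' V := hSV
    obtain ⟨d, hd⟩ := hpre.2 hnone
    exact ⟨d.1, d.2, hd⟩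

end Hyps

end Stmt4Dir

/-! #### The crux: the preimage of the top point is open -/

section Stmt4Crux

open Classical

variable {P : Type u} [PartialOrder P]

local instance : TopologicalSpace P := sigmaTop P
local instance : TopologicalSpace (Sobrification P) := sobrTop P

/-- The saturated set in `P` associated with an interpolating chain in `C`. -/
def KOset {C : Type u} [tC : TopologicalSpace C] (ρ : C → Sobrification P)
    (X : ℕ → Set C) : Set P :=
  ⋂₀ {U : Set P | IsOpen U ∧ ∃ n, X n ⊆ ρ ⁻¹' UsS U}

lemma KO_saturated {C : Type u} [tC : TopologicalSpace C] (ρ : C → Sobrification P)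
    (X : ℕ → Set C) : Saturated (KOset ρ X) := by
  apply subset_antisymm
  · intro x hx
    exact Set.mem_sInter.mpr fun U hU => hU.2 hx
  · intro x hx
    refine Set.mem_sInter.mpr fun U hU => ?_
    exact Set.mem_sInter.mp hx U ⟨hU.1, Set.sInter_subset_of_mem hU⟩

lemma KO_compact {C : Type u} [tC : TopologicalSpace C]
    (hirr : ∀ A : Set P, IrrCl P A → (∃ x : P, A = {y | y ≤ x}) ∨ A = Set.univ)
    (ρ : C → Sobrification P) (hρ : Continuous ρ)
    (X : ℕ → Set C) (hXo : ∀ n, IsOpen (X n)) (hXs : ∀ n, WayBelow (X (n + 1)) (X n))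
    (hKne : (KOset ρ X).Nonempty) : IsCompact (KOset ρ X) := by
  apply isCompact_of_finite_subcover
  intro ι Uf hUfo hcov
  -- the union of the cover
  set Ustar : Set P := ⋃ i, Uf i with hUstar
  have hUstaro : IsOpen Ustar := isOpen_iUnion hUfo
  have hXstep : ∀ k, X (k + 1) ⊆ X k := fun k => wayBelow_subset (hXo k) (hXs k)
  have hXmono : ∀ m n : ℕ, n ≤ m → X m ⊆ X n := by
    intro m
    induction m with
    | zero => intro n h; rw [Nat.le_zero.mp h]
    | succ k ih =>
        intro n h
        rcases Nat.le_succ_iff.mp h with h' | rfl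
        · exact (hXstep k).trans (ih n h')
        · exact subset_rfl
  -- Step 1: some X n is contained in Φ(Ustar)
  have hgap : ∃ n, X n ⊆ ρ ⁻¹' UsS Ustar := by
    by_contra hng
    push_neg at hng
    set W₀ : Set C := ρ ⁻¹' UsS Ustar with hW₀def
    have hW₀o : IsOpen W₀ := hρ.isOpen_preimage _ (isOpen_UsS hUstaro)
    set 𝒵 : Set (Set C) := {W | IsOpen W ∧ W₀ ⊆ W ∧ ∀ n, ¬X n ⊆ W} with h𝒵
    have hW₀𝒵 : W₀ ∈ 𝒵 := ⟨hW₀o, subset_rfl, fun n h => hng n h⟩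
    have hchains : ∀ ch ⊆ 𝒵, IsChain (· ⊆ ·) ch → ch.Nonempty →
        ∃ ub ∈ 𝒵, ∀ s ∈ ch, s ⊆ ub := by
      intro ch hchS hchain hchne
      refine ⟨⋃₀ ch, ⟨isOpen_sUnion fun s hs => (hchS hs).1, ?_, ?_⟩,
        fun s hs => Set.subset_sUnion_of_mem hs⟩
      · obtain ⟨s₀, hs₀⟩ := hchne
        exact (hchS hs₀).2.1.trans (Set.subset_sUnion_of_mem hs₀)
      · intro n hsub
        obtain ⟨F, hFch, hXF⟩ := hXs n ch (fun s hs => (hchS hs).1) hsub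
        obtain ⟨s₀, hs₀⟩ := hchne
        obtain ⟨Wub, hWubch, hFub⟩ := chain_finset_ub hchain hs₀ F hFch
        have : X (n + 1) ⊆ Wub := by
          refine hXF.trans ?_
          intro x hx
          obtain ⟨t, htF, hxt⟩ := hx
          exact hFub t htF hxt
        exact (hchS hWubch).2.2 (n + 1) this
    obtain ⟨W, hW₀W, hWmax⟩ := zorn_subset_nonempty 𝒵 hchains W₀ hW₀𝒵
    have hW𝒵 : W ∈ 𝒵 := hWmax.1
    have hWo : IsOpen W := hW𝒵.1
    -- consequence of maximality
    have hmax' : ∀ u : Set C, IsOpen u → ¬u ⊆ W → ∃ n, X n ⊆ W ∪ u := by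
      intro u hu hnsub
      by_contra h2
      push_neg at h2
      have hmem : W ∪ u ∈ 𝒵 :=
        ⟨hWo.union hu, hW𝒵.2.1.trans Set.subset_union_left, h2⟩
      have := hWmax.2 hmem Set.subset_union_left
      exact hnsub (fun x hx => this (Set.mem_union_right _ hx))
    -- the closed irreducible image of the complement of W
    set B : Set P := ⋃ e ∈ Wᶜ, ((ρ e : Set P)) with hBdef
    set A : Set P := closure B with hAdef
    have hBA : B ⊆ A := subset_closure
    have hmeet : ∀ {u : Set P}, IsOpen u →
        ((A ∩ u).Nonempty ↔ ∃ e ∈ Wᶜ, ((ρ e : Set P) ∩ u).Nonempty) := by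
      intro u hu
      constructor
      · rintro ⟨p, hpA, hpu⟩
        obtain ⟨q, hqu, hqB⟩ := mem_closure_iff.mp hpA u hu hpu
        obtain ⟨e, he, hqe⟩ := Set.mem_iUnion₂.mp hqB
        exact ⟨e, he, q, hqe, hqu⟩
      · rintro ⟨e, he, p, hpe, hpu⟩
        exact ⟨p, hBA (Set.mem_iUnion₂.mpr ⟨e, he, hpe⟩), hpu⟩
    have hWc_ne : Wᶜ.Nonempty := by
      rcases Set.eq_empty_or_nonempty Wᶜ with h | h
      · exfalso
        have : W = Set.univ := by
          rw [← Set.compl_empty_iff]; exact h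
        exact hW𝒵.2.2 0 (this ▸ Set.subset_univ _)
      · exact h
    have hA_irr : IsIrreducible A := by
      constructor
      · obtain ⟨e, he⟩ := hWc_ne
        obtain ⟨p, hp⟩ := nonempty_val (ρ e)
        exact ⟨p, hBA (Set.mem_iUnion₂.mpr ⟨e, he, hp⟩)⟩
      · intro u v hu hv hu' hv'
        obtain ⟨e₁, he₁, hmeet₁⟩ := (hmeet hu).mp hu'
        obtain ⟨e₂, he₂, hmeet₂⟩ := (hmeet hv).mp hv'
        have hΦu : ¬(ρ ⁻¹' UsS u) ⊆ W := fun h => he₁ (h hmeet₁)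
        have hΦv : ¬(ρ ⁻¹' UsS v) ⊆ W := fun h => he₂ (h hmeet₂)
        obtain ⟨n₁, hn₁⟩ := hmax' _ (hρ.isOpen_preimage _ (isOpen_UsS hu)) hΦu
        obtain ⟨n₂, hn₂⟩ := hmax' _ (hρ.isOpen_preimage _ (isOpen_UsS hv)) hΦv
        set m := max n₁ n₂ with hm
        have hXm : X m ⊆ W ∪ ρ ⁻¹' UsS (u ∩ v) := by
          intro x hx
          have hx₁ := hn₁ (hXmono m n₁ (le_max_left n₁ n₂) hx)
          have hx₂ := hn₂ (hXmono m n₂ (le_max_right n₁ n₂) hx)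
          rcases hx₁ with h | h₁
          · exact Or.inl h
          rcases hx₂ with h | h₂
          · exact Or.inl h
          · refine Or.inr ?_
            show ρ x ∈ UsS (u ∩ v)
            rw [UsS_inter hu hv]
            exact ⟨h₁, h₂⟩
        have hnXmW : ¬X m ⊆ W := hW𝒵.2.2 m
        obtain ⟨e₃, he₃X, he₃W⟩ := Set.not_subset.mp hnXmW
        have : e₃ ∈ W ∪ ρ ⁻¹' UsS (u ∩ v) := hXm he₃X
        rcases this with h | h
        · exact absurd h he₃W
        · obtain ⟨p, hpe, hpuv⟩ := h
          exact ⟨p, hBA (Set.mem_iUnion₂.mpr ⟨e₃, he₃W, hpe⟩), hpuv⟩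
    -- A ∩ Ustar is nonempty leads to a contradiction
    have hfinal : (A ∩ Ustar).Nonempty → False := by
      rintro h
      obtain ⟨e, heW, hmeete⟩ := (hmeet hUstaro).mp h
      exact heW (hW𝒵.2.1 hmeete)
    rcases hirr A ⟨hA_irr, isClosed_closure⟩ with ⟨x₀, hx₀⟩ | huniv
    · -- A = ↓x₀ : then x₀ ∈ KOset, so x₀ ∈ Ustar
      have hx₀K : x₀ ∈ KOset ρ X := by
        refine Set.mem_sInter.mpr ?_
        rintro U ⟨hUo, n, hXn⟩
        obtain ⟨e, heX, heW⟩ := Set.not_subset.mp (hW𝒵.2.2 n)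
        obtain ⟨p, hpe, hpU⟩ := hXn heX
        have hpA : p ∈ A := hBA (Set.mem_iUnion₂.mpr ⟨e, heW, hpe⟩)
        rw [hx₀] at hpA
        exact upper_of_open hUo hpU hpA
      have hx₀star : x₀ ∈ Ustar := hcov hx₀K
      exact hfinal ⟨x₀, by rw [hx₀]; exact le_refl x₀, hx₀star⟩
    · obtain ⟨k, hk⟩ := hKne
      have hkstar : k ∈ Ustar := hcov hk
      exact hfinal ⟨k, by rw [huniv]; trivial, hkstar⟩
  -- Step 2: extract a finite subcover
  obtain ⟨n, hn⟩ := hgap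
  have hcov' : X n ⊆ ⋃₀ (Set.range fun i => ρ ⁻¹' UsS (Uf i)) := by
    intro x hx
    obtain ⟨p, hpx, hpU⟩ := hn hx
    obtain ⟨i, hi⟩ := Set.mem_iUnion.mp hpU
    exact ⟨ρ ⁻¹' UsS (Uf i), ⟨i, rfl⟩, ⟨p, hpx, hi⟩⟩
  obtain ⟨F, hFr, hXF⟩ := hXs n _ (by
      rintro W ⟨i, rfl⟩
      exact hρ.isOpen_preimage _ (isOpen_UsS (hUfo i))) hcov'
  have hch : ∀ W ∈ F, ∃ i, ρ ⁻¹' UsS (Uf i) = W := fun W hW => hFr hW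
  choose gi hgi using hch
  refine ⟨F.attach.image (fun W => gi W.1 W.2), ?_⟩
  apply Set.sInter_subset_of_mem
  refine ⟨isOpen_biUnion fun i _ => hUfo i, n + 1, ?_⟩
  refine hXF.trans ?_
  intro x hx
  obtain ⟨W, hWF, hxW⟩ := hx
  have hWF' : W ∈ F := Finset.mem_coe.mp hWF
  rw [← hgi W hWF'] at hxW
  obtain ⟨p, hpx, hpU⟩ := hxW
  refine ⟨p, hpx, Set.mem_biUnion ?_ hpU⟩
  exact Finset.mem_image.mpr ⟨⟨W, hWF'⟩, Finset.mem_attach _ _, rfl⟩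

lemma crux (hwf : WellFiltered P)
    (hirr : ∀ A : Set P, IrrCl P A → (∃ x : P, A = {y | y ≤ x}) ∨ A = Set.univ)
    (N1 : IrrCl P Set.univ) (N2 : ∀ x : P, dset x ≠ Set.univ)
    (C : Type u) (tC : TopologicalSpace C) (hcc : CoreCompact C)
    (ρ : C → Sobrification P) (hρ : Continuous ρ) :
    IsOpen (ρ ⁻¹' {(⟨Set.univ, N1⟩ : Sobrification P)}) := by
  set uM : Sobrification P := ⟨Set.univ, N1⟩ with huM
  by_contra hno
  rw [isOpen_iff_forall_mem_open] at hno
  push_neg at hno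
  obtain ⟨c, hc, hbad⟩ := hno
  have hcuM : ρ c = uM := hc
  -- every open neighbourhood of c contains a point mapped to a principal lower set
  have hstar : ∀ O : Set C, IsOpen O → c ∈ O →
      ∃ c' ∈ O, ∃ x : P, ((ρ c' : Set P)) = dset x := by
    intro O hO hcO
    have hns : ¬O ⊆ ρ ⁻¹' {uM} := fun hsub => hbad O hsub hO hcO
    obtain ⟨c', hc'O, hc'n⟩ := Set.not_subset.mp hns
    rcases hirr _ (ρ c').2 with ⟨x, hx⟩ | hx
    · exact ⟨c', hc'O, x, hx⟩
    · exact absurd (Subtype.ext hx : ρ c' = uM) hc'n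
  have hcΦ : ∀ {U : Set P}, U.Nonempty → c ∈ ρ ⁻¹' UsS U := by
    intro U hU
    show ρ c ∈ UsS U
    rw [hcuM]
    obtain ⟨p, hp⟩ := hU
    exact ⟨p, trivial, hp⟩
  -- per-open-neighbourhood data
  have hV0 : ∀ O : Set C, IsOpen O → c ∈ O →
      ∃ V₀, IsOpen V₀ ∧ c ∈ V₀ ∧ WayBelow V₀ O := fun O hO hcO => hcc O hO c hcO
  classical
  -- the family of compact saturated sets
  set fam : Set (Set P) := {K | ∃ (O : Set C) (hO : IsOpen O) (hcO : c ∈ O),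
    K = KOset ρ (fun n => (wbChain hcc (hV0 O hO hcO).choose O hO
      (hV0 O hO hcO).choose_spec.2.2 n).1)} with hfam
  -- generic facts about each member
  have hmember : ∀ (O : Set C) (hO : IsOpen O) (hcO : c ∈ O),
      (KOset ρ (fun n => (wbChain hcc (hV0 O hO hcO).choose O hO
        (hV0 O hO hcO).choose_spec.2.2 n).1)).Nonempty ∧
      IsCompact (KOset ρ (fun n => (wbChain hcc (hV0 O hO hcO).choose O hO
        (hV0 O hO hcO).choose_spec.2.2 n).1)) ∧
      Saturated (KOset ρ (fun n => (wbChain hcc (hV0 O hO hcO).choose O hO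
        (hV0 O hO hcO).choose_spec.2.2 n).1)) := by
    intro O hO hcO
    set V₀ := (hV0 O hO hcO).choose with hV₀def
    obtain ⟨hV₀o, hcV₀, hV₀wb⟩ := (hV0 O hO hcO).choose_spec
    set X : ℕ → Set C := fun n => (wbChain hcc V₀ O hO hV₀wb n).1 with hXdef
    have hXo : ∀ n, IsOpen (X n) := fun n => (wbChain hcc V₀ O hO hV₀wb n).2.1
    have hXs : ∀ n, WayBelow (X (n + 1)) (X n) := fun n => wbChain_succ hcc V₀ O hO hV₀wb n
    have hV₀X : ∀ n, V₀ ⊆ X n := fun n =>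
      wayBelow_subset (hXo n) (wbChain hcc V₀ O hO hV₀wb n).2.2
    have hne : (KOset ρ X).Nonempty := by
      obtain ⟨c', hc'V₀, x, hx⟩ := hstar V₀ hV₀o hcV₀
      refine ⟨x, Set.mem_sInter.mpr ?_⟩
      rintro U ⟨hUo, n, hXn⟩
      have : ((ρ c' : Set P) ∩ U).Nonempty := hXn (hV₀X n hc'V₀)
      rw [hx] at this
      obtain ⟨p, hpx, hpU⟩ := this
      exact upper_of_open hUo hpU hpx
    exact ⟨hne, KO_compact hirr ρ hρ X hXo hXs hne, KO_saturated ρ X⟩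
  -- the family is filtered
  have hfilt : ∀ K₁ ∈ fam, ∀ K₂ ∈ fam, ∃ K₃ ∈ fam, K₃ ⊆ K₁ ∧ K₃ ⊆ K₂ := by
    rintro K₁ ⟨O₁, hO₁, hcO₁, rfl⟩ K₂ ⟨O₂, hO₂, hcO₂, rfl⟩
    set V₁ := (hV0 O₁ hO₁ hcO₁).choose
    set V₂ := (hV0 O₂ hO₂ hcO₂).choose
    have hV₁s := (hV0 O₁ hO₁ hcO₁).choose_spec
    have hV₂s := (hV0 O₂ hO₂ hcO₂).choose_spec
    set O₃ : Set C := V₁ ∩ V₂ with hO₃def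
    have hO₃ : IsOpen O₃ := hV₁s.1.inter hV₂s.1
    have hcO₃ : c ∈ O₃ := ⟨hV₁s.2.1, hV₂s.2.1⟩
    refine ⟨_, ⟨O₃, hO₃, hcO₃, rfl⟩, ?_, ?_⟩
    · -- K₃ ⊆ K₁
      intro x hx
      refine Set.mem_sInter.mpr ?_
      rintro U ⟨hUo, n, hXn⟩
      refine Set.mem_sInter.mp hx U ⟨hUo, 0, ?_⟩
      have hV₁X : V₁ ⊆ (wbChain hcc V₁ O₁ hO₁ hV₁s.2.2 n).1 :=
        wayBelow_subset (wbChain hcc V₁ O₁ hO₁ hV₁s.2.2 n).2.1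
          (wbChain hcc V₁ O₁ hO₁ hV₁s.2.2 n).2.2
      exact (Set.inter_subset_left.trans hV₁X).trans hXn
    · intro x hx
      refine Set.mem_sInter.mpr ?_
      rintro U ⟨hUo, n, hXn⟩
      refine Set.mem_sInter.mp hx U ⟨hUo, 0, ?_⟩
      have hV₂X : V₂ ⊆ (wbChain hcc V₂ O₂ hO₂ hV₂s.2.2 n).1 :=
        wayBelow_subset (wbChain hcc V₂ O₂ hO₂ hV₂s.2.2 n).2.1
          (wbChain hcc V₂ O₂ hO₂ hV₂s.2.2 n).2.2
      exact (Set.inter_subset_right.trans hV₂X).trans hXn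
  -- apply well-filteredness with the empty open set
  have hfam_ne : fam.Nonempty :=
    ⟨_, Set.univ, isOpen_univ, trivial, rfl⟩
  have hprops : ∀ K ∈ fam, K.Nonempty ∧ IsCompact K ∧ Saturated K := by
    rintro K ⟨O, hO, hcO, rfl⟩
    exact hmember O hO hcO
  have hempty : ⋂₀ fam ⊆ (∅ : Set P) := by
    intro z hz
    exfalso
    -- use the open set (↓z)ᶜ
    set Uz : Set P := (dset z)ᶜ with hUz
    have hUzo : IsOpen Uz := (dset_closed z).isOpen_compl
    have hUzne : Uz.Nonempty := by
      rcases Set.eq_empty_or_nonempty Uz with h | h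
      · exfalso
        apply N2 z
        apply Set.eq_univ_of_forall
        intro y
        by_contra hy
        exact Set.eq_empty_iff_forall_notMem.mp h y hy
      · exact h
    set Ostar : Set C := ρ ⁻¹' UsS Uz with hOstar
    have hOstaro : IsOpen Ostar := hρ.isOpen_preimage _ (isOpen_UsS hUzo)
    have hcOstar : c ∈ Ostar := hcΦ hUzne
    have hzK : z ∈ KOset ρ (fun n => (wbChain hcc (hV0 Ostar hOstaro hcOstar).choose
        Ostar hOstaro (hV0 Ostar hOstaro hcOstar).choose_spec.2.2 n).1) :=
      Set.mem_sInter.mp hz _ ⟨Ostar, hOstaro, hcOstar, rfl⟩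
    have hzUz : z ∈ Uz :=
      Set.mem_sInter.mp hzK Uz ⟨hUzo, 0, subset_rfl⟩
    exact hzUz (le_refl z)
  obtain ⟨K, hKfam, hKempty⟩ := hwf.2 fam hfam_ne hprops hfilt ∅ isOpen_empty hempty
  obtain ⟨O, hO, hcO, rfl⟩ := hKfam
  obtain ⟨k, hk⟩ := (hmember O hO hcO).1
  exact hKempty hk

end Stmt4Crux

/-! #### The other inclusion and assembly -/

section Stmt4Final

open Classical

variable {P : Type u} [PartialOrder P]

local instance : TopologicalSpace P := sigmaTop P
local instance : TopologicalSpace (Sobrification P) := sobrTop P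

lemma scott_to_ccg
    (hwf : WellFiltered P)
    (hirr : ∀ A : Set P, IrrCl P A → (∃ x : P, A = {y | y ≤ x}) ∨ A = Set.univ)
    (N1 : IrrCl P Set.univ) (N2 : ∀ x : P, dset x ≠ Set.univ)
    (V : Set (Sobrification P))
    (hV : ScottOpenWrt (fun A B : Sobrification P => (A : Set P) ⊆ (B : Set P)) V) :
    ccgOpen (Sobrification P) V := by
  intro C tC hcc ρ hρ
  set uM : Sobrification P := ⟨Set.univ, N1⟩ with huM
  set U : Set P := {x | dnM x ∈ V} with hUdef
  have hUo : IsOpen U := by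
    refine sOpen_iff.mpr ⟨?_, ?_⟩
    · intro x hx y hxy
      exact hV.1 hx (fun q hq => le_trans hq hxy)
    · intro D hD s hsup hsU
      set 𝒟 : Set (Sobrification P) := dnM '' D with h𝒟
      have hdir : DirectedSubset (fun A B : Sobrification P => (A : Set P) ⊆ (B : Set P)) 𝒟 := by
        constructor
        · obtain ⟨d, hd⟩ := hD.1
          exact ⟨dnM d, d, hd, rfl⟩
        · rintro _ ⟨d₁, hd₁, rfl⟩ _ ⟨d₂, hd₂, rfl⟩
          obtain ⟨d₃, hd₃, h13, h23⟩ := hD.2 d₁ hd₁ d₂ hd₂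
          exact ⟨dnM d₃, ⟨d₃, hd₃, rfl⟩,
            fun q hq => le_trans hq h13, fun q hq => le_trans hq h23⟩
      have hsupM : IsSupWrt (fun A B : Sobrification P => (A : Set P) ⊆ (B : Set P)) 𝒟
          (dnM s) := by
        constructor
        · rintro _ ⟨d, hd, rfl⟩
          exact fun q hq => le_trans hq (hsup.1 d hd)
        · intro T hT
          have hDT : D ⊆ (T : Set P) := by
            intro d hd
            exact hT (dnM d) ⟨d, hd, rfl⟩ (le_refl d)
          have hsT : s ∈ (T : Set P) := sup_mem_closed T.2.2 hD hDT hsup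
          exact fun q hq => lower_of_closed T.2.2 hsT hq
      obtain ⟨A, hA𝒟, hAV⟩ := hV.2 𝒟 hdir (dnM s) hsupM hsU
      obtain ⟨d, hdD, rfl⟩ := hA𝒟
      exact ⟨d, hdD, hAV⟩
  have hVsub : ∀ A : Sobrification P, A ∈ V → A ∈ UsS U ∨ A = uM := by
    intro A hA
    rcases hirr _ A.2 with ⟨x, hx⟩ | hx
    · left
      have hAdn : A = dnM x := Subtype.ext hx
      rw [hAdn] at hA
      exact ⟨x, by rw [hx]; exact le_refl x, hA⟩
    · right
      exact Subtype.ext hx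
  have hUsub : UsS U ⊆ V := by
    rintro A ⟨p, hpA, hpU⟩
    refine hV.1 (hpU : dnM p ∈ V) ?_
    intro q hq
    exact lower_of_closed A.2.2 hpA hq
  by_cases huV : uM ∈ V
  · have hVeq : ρ ⁻¹' V = ρ ⁻¹' UsS U ∪ ρ ⁻¹' {uM} := by
      ext c'
      constructor
      · intro h
        rcases hVsub _ h with h' | h'
        · exact Or.inl h'
        · exact Or.inr h'
      · rintro (h | h)
        · exact hUsub h
        · rw [Set.mem_preimage, Set.mem_singleton_iff] at h
          rw [Set.mem_preimage, h]
          exact huV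
    rw [hVeq]
    exact (hρ.isOpen_preimage _ (isOpen_UsS hUo)).union (crux hwf hirr N1 N2 C tC hcc ρ hρ)
  · have hVeq : ρ ⁻¹' V = ρ ⁻¹' UsS U := by
      ext c'
      constructor
      · intro h
        rcases hVsub _ h with h' | h'
        · exact h'
        · rw [Set.mem_preimage] at h
          rw [h'] at h
          exact absurd h huV
      · intro h
        exact hUsub h
    rw [hVeq]
    exact hρ.isOpen_preimage _ (isOpen_UsS hUo)

lemma stmt4_aux
    (hdcpo : ∀ D : Set P, DirectedSubset (· ≤ · : P → P → Prop) D →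
      ∃ s : P, IsSupWrt (· ≤ ·) D s)
    (hwf : WellFiltered P)
    (hns : ¬SoberSpace P)
    (hirr : ∀ A : Set P, IrrCl P A → (∃ x : P, A = {y | y ≤ x}) ∨ A = Set.univ) :
    ccgTopology (Sobrification P)
      = scottTop (fun A B : Sobrification P => (A : Set P) ⊆ (B : Set P)) := by
  -- derive the two structural consequences of non-sobriety
  have hnall : ¬∀ A : Set P, IsIrreducible A → IsClosed A →
      ∃! x : P, A = closure ({x} : Set P) := by
    intro h
    exact hns ⟨hwf.1, h⟩
  push_neg at hnall
  obtain ⟨A, hAi, hAc, hAno⟩ := hnall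
  have huniqueness : ∀ x : P, A = Set.univ ∨ A = dset x →
      A = dset x → ∃! y : P, A = closure ({y} : Set P) := by
    intro x _ hAx
    refine ⟨x, ?_, ?_⟩
    · show A = closure ({x} : Set P)
      rw [closure_singleton_eq]; exact hAx
    intro y hy
    have hy : A = closure ({y} : Set P) := hy
    rw [closure_singleton_eq] at hy
    have h1 : x ≤ y := by
      have : x ∈ dset y := by rw [← hy, hAx]; exact le_refl x
      exact this
    have h2 : y ≤ x := by
      have : y ∈ dset x := by rw [← hAx, hy]; exact le_refl y
      exact this
    exact le_antisymm h2 h1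
  have hAuniv : A = Set.univ := by
    rcases hirr A ⟨hAi, hAc⟩ with ⟨x, hx⟩ | h
    · exact absurd (huniqueness x (Or.inr hx) hx) hAno
    · exact h
  have N1 : IrrCl P Set.univ := ⟨hAuniv ▸ hAi, hAuniv ▸ hAc⟩
  have N2 : ∀ x : P, dset x ≠ Set.univ := by
    intro x hx
    exact hAno (huniqueness x (Or.inl hAuniv) (by rw [hAuniv, hx]))
  refine TopologicalSpace.ext ?_
  funext V
  exact propext ⟨fun h => ccg_to_scott hdcpo hirr V h,
    fun h => scott_to_ccg hwf hirr N1 N2 V h⟩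

end Stmt4Final

/-- if `P` is a well-filtered, non-sober dcpo whose Scott-irreducible closed
sets are exactly the principal lower sets together with `P`, then the core compactly
generated topology of the standard sobrification `P^s` of `ΣP` is the Scott topology of
`(IRR(P), ⊆)`. -/
theorem stmt4 {P : Type u} [PartialOrder P]
    (hdcpo : ∀ D : Set P, DirectedSubset (· ≤ · : P → P → Prop) D →
      ∃ s : P, IsSupWrt (· ≤ ·) D s)
    (hwf : @WellFiltered P (sigmaTop P))
    (hns : ¬ @SoberSpace P (sigmaTop P))
    (hirr : ∀ A : Set P, IrrCl P A → (∃ x : P, A = {y | y ≤ x}) ∨ A = Set.univ) :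
    @ccgTopology (Sobrification P) (sobrTop P)
      = scottTop (fun A B : Sobrification P => (A : Set P) ⊆ (B : Set P)) := by
  exact stmt4_aux hdcpo hwf hns hirr
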